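/- If < is a strict order on X, then the Dershowitz–Manna ordering on finite multisets over X is a strict order (irreflexive and transitive). -/

import Mathlib

def DMLt {X : Type*} [DecidableEq X] (lt : X → X → Prop) (A B : Multiset X) : Prop :=
  ∃ C D : Multiset X, C ≠ 0 ∧ C ≤ B ∧ A = (B - C) + D ∧
    ∀ d ∈ D, ∃ c ∈ C, lt d c

/-- Every nonempty finite multiset has a `lt`-maximal element. -/
lemma exists_maximal {X : Type*} [DecidableEq X] (lt : X → X → Prop)
    (hirr : ∀ x, ¬ lt x x) (htrans : ∀ x y z, lt x y → lt y z → lt x z) :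
    ∀ (C : Multiset X), C ≠ 0 → ∃ c ∈ C, ∀ c' ∈ C, ¬ lt c c' := by
  intro C
  induction C using Multiset.induction with
  | empty => intro h; exact absurd rfl h
  | cons a s ih =>
    intro _
    by_cases hs : s = 0
    · subst hs
      refine ⟨a, Multiset.mem_cons_self a 0, ?_⟩
      intro c' hc'
      simp only [Multiset.mem_cons, Multiset.notMem_zero, or_false] at hc'
      rw [hc']; exact hirr a
    · obtain ⟨m, hm, hmax⟩ := ih hs
      by_cases hma : lt m a
      · refine ⟨a, Multiset.mem_cons_self a s, ?_⟩
        intro c' hc'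
        rcases Multiset.mem_cons.mp hc' with h | h
        · rw [h]; exact hirr a
        · intro hac'
          exact hmax c' h (htrans m a c' hma hac')
      · refine ⟨m, Multiset.mem_cons_of_mem hm, ?_⟩
        intro c' hc'
        rcases Multiset.mem_cons.mp hc' with h | h
        · rw [h]; exact hma
        · exact hmax c' h

lemma add_tsub_aux {X : Type*} [DecidableEq X] (s t u : Multiset X) :
    (s + t) - u = (s - (u - t)) + (t - u) := by
  ext x
  simp only [Multiset.count_sub, Multiset.count_add]
  omega

/-- If `lt` is a strict order on `X` (irreflexive and transitive), then the
Dershowitz–Manna ordering on finite multisets over `X` is irreflexive and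
transitive. -/
theorem DMLt_strictOrder {X : Type*} [DecidableEq X] (lt : X → X → Prop)
    (hirr : ∀ x, ¬ lt x x) (htrans : ∀ x y z, lt x y → lt y z → lt x z) :
    (∀ A : Multiset X, ¬ DMLt lt A A) ∧
    (∀ A B C : Multiset X, DMLt lt A B → DMLt lt B C → DMLt lt A C) := by
  constructor
  · rintro A ⟨C, D, hC0, hCA, hEq, hD⟩
    have hDC : D = C := by
      have h1 : (A - C) + D = (A - C) + C := by
        rw [← hEq, tsub_add_cancel_of_le hCA]
      exact add_left_cancel h1
    subst hDC
    obtain ⟨m, hm, hmax⟩ := exists_maximal lt hirr htrans D hC0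
    obtain ⟨c, hc, hlt⟩ := hD m hm
    exact hmax c hc hlt
  · rintro A B C ⟨C₁, D₁, hC₁0, hC₁B, hA, hD₁⟩ ⟨C₂, D₂, hC₂0, hC₂C, hB, hD₂⟩
    refine ⟨C₂ + (C₁ - D₂), D₁ + (D₂ - C₁), ?_, ?_, ?_, ?_⟩
    · intro h
      exact hC₂0 ((by simpa using h : C₂ = 0 ∧ C₁ - D₂ = 0)).1
    · have h1 : C₁ - D₂ ≤ C - C₂ := by
        have : C₁ ≤ (C - C₂) + D₂ := hB ▸ hC₁B
        exact Multiset.le_iff_count.mpr fun x => by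
          have := Multiset.le_iff_count.mp this x
          simp only [Multiset.count_sub, Multiset.count_add] at *
          omega
      calc C₂ + (C₁ - D₂) ≤ C₂ + (C - C₂) := add_le_add le_rfl h1
        _ = C := by rw [add_comm, tsub_add_cancel_of_le hC₂C]
    · have key : B - C₁ = (C - (C₂ + (C₁ - D₂))) + (D₂ - C₁) := by
        rw [hB, add_tsub_aux, ← tsub_add_eq_tsub_tsub]
      rw [hA, key, add_assoc, add_comm (D₂ - C₁) D₁]
    · intro d hd
      rcases Multiset.mem_add.mp hd with h | h
      · obtain ⟨c, hc, hlt⟩ := hD₁ d h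
        by_cases hcd : c ∈ C₁ - D₂
        · exact ⟨c, Multiset.mem_add.mpr (Or.inr hcd), hlt⟩
        · have hcD₂ : c ∈ D₂ := by
            have h1 : Multiset.count c (C₁ - D₂) = 0 :=
              Multiset.count_eq_zero.mpr hcd
            have h2 : 0 < Multiset.count c C₁ := Multiset.count_pos.mpr hc
            rw [Multiset.count_sub] at h1
            exact Multiset.count_pos.mp (by omega)
          obtain ⟨c₂, hc₂, hlt₂⟩ := hD₂ c hcD₂
          exact ⟨c₂, Multiset.mem_add.mpr (Or.inl hc₂), htrans d c c₂ hlt hlt₂⟩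
      · have hdD₂ : d ∈ D₂ := Multiset.mem_of_le (tsub_le_self) h
        obtain ⟨c₂, hc₂, hlt₂⟩ := hD₂ d hdD₂
        exact ⟨c₂, Multiset.mem_add.mpr (Or.inl hc₂), hlt₂⟩
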